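/- arXiv:0710.0431 — 9 statements merged into one kernel-verified Lean document; each statement's English description precedes it below -/
import Mathlib

section
/- The average Hamming distance d_H of a counting sequence S of length n > 1 satisfies 1 ≤ d_H ≤ n - 1/2, where the average is taken cyclically over all 2^n pairs of successive codewords. -/
/-- The average cyclic Hamming distance of any counting sequence of
length `n > 1` (a cyclic listing of all `2^n` binary `n`-tuples) lies between `1`
and `n - 1/2`. -/
theorem avg_hamming_dist_bounds (n : ℕ) (hn : 1 < n)
    (x : Fin (2^n) → Fin n → Bool) (hx : Function.Bijective x) :
    1 ≤ (∑ k : Fin (2^n), (hammingDist (x k) (x (k+1)) : ℚ)) / 2^n ∧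
    (∑ k : Fin (2^n), (hammingDist (x k) (x (k+1)) : ℚ)) / 2^n ≤ (n : ℚ) - 1/2 := by
  have h4 : (4:ℕ) ≤ 2^n := by
    calc (4:ℕ) = 2^2 := rfl
      _ ≤ 2^n := Nat.pow_le_pow_right (by norm_num) hn
  have hpos : (0:ℚ) < 2^n := by positivity
  set d : Fin (2^n) → ℕ := fun k => hammingDist (x k) (x (k+1)) with hd
  -- k ≠ k + 1
  have h1 : ∀ k : Fin (2^n), k ≠ k + 1 := by
    intro k h
    have h0 : (1 : Fin (2^n)) = 0 := (left_eq_add).mp h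
    have := congrArg Fin.val h0
    simp [Fin.val_one', Nat.mod_eq_of_lt (by omega : 1 < 2^n)] at this
  have h2 : ∀ k : Fin (2^n), k ≠ k + 2 := by
    intro k h
    have h0 : (2 : Fin (2^n)) = 0 := (left_eq_add).mp h
    have : ((2 : Fin (2^n)) : ℕ) = 2 % 2^n := Fin.val_ofNat ..
    rw [h0, Nat.mod_eq_of_lt (by omega)] at this
    simp at this
  -- each step has distance ≥ 1
  have hd1 : ∀ k, 1 ≤ d k := by
    intro k
    rw [Nat.one_le_iff_ne_zero, hd]
    simp only [ne_eq, hammingDist_eq_zero]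
    intro h
    exact h1 k (hx.injective h)
  -- full-distance steps: all coordinates differ
  have hfull : ∀ k, d k = n → ∀ i, x k i ≠ x (k+1) i := by
    intro k h i
    have : (Finset.univ.filter fun i => x k i ≠ x (k+1) i) = Finset.univ := by
      apply Finset.eq_univ_of_card
      rw [Fintype.card_fin]; exact h
    exact (Finset.mem_filter.mp ((by rw [this]; exact Finset.mem_univ i :
      i ∈ Finset.univ.filter fun i => x k i ≠ x (k+1) i))).2
  -- no two consecutive full-distance steps
  have hcons : ∀ k, d k = n → d (k+1) = n → False := by
    intro k ha hb
    have hxe : x k = x (k+1+1) := by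
      funext i
      have p := hfull k ha i
      have q := hfull (k+1) hb i
      revert p q
      cases x k i <;> cases x (k+1) i <;> cases x (k+1+1) i <;> simp
    have : k = k + 1 + 1 := hx.injective hxe
    rw [add_assoc] at this
    exact h2 k (by convert this using 2; ext; simp [Fin.val_add])
  -- the set of full-distance steps
  set A : Finset (Fin (2^n)) := Finset.univ.filter fun k => d k = n with hA
  have hAcard : 2 * A.card ≤ 2^n := by
    have hinj : Function.Injective (fun k : Fin (2^n) => k + 1) := fun a b h => by
      simpa using h
    have hdisj : Disjoint A (A.image (fun k => k + 1)) := by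
      rw [Finset.disjoint_left]
      intro a haA haB
      obtain ⟨j, hjA, hj⟩ := Finset.mem_image.mp haB
      subst hj
      exact hcons j (Finset.mem_filter.mp hjA).2 (Finset.mem_filter.mp haA).2
    have := Finset.card_union_of_disjoint hdisj ▸ Finset.card_le_univ (A ∪ A.image (fun k => k + 1))
    rw [Finset.card_image_of_injective _ hinj] at this
    simpa [Fintype.card_fin, two_mul] using this
  -- bound the sum
  have hsum_le : (∑ k : Fin (2^n), (d k : ℚ)) ≤ (n : ℚ) * 2^n - 2^n / 2 := by
    have hsplit := Finset.sum_filter_add_sum_filter_not Finset.univ (fun k => d k = n)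
      (fun k => (d k : ℚ))
    have hA_sum : (∑ k ∈ A, (d k : ℚ)) = n * A.card := by
      rw [Finset.sum_congr rfl (fun k hk => by
        rw [(Finset.mem_filter.mp hk).2])]
      simp [mul_comm]
    set B : Finset (Fin (2^n)) := Finset.univ.filter (fun k => ¬ d k = n) with hB
    have hB_sum : (∑ k ∈ B, (d k : ℚ)) ≤ B.card * ((n : ℚ) - 1) := by
      rw [← nsmul_eq_mul]
      apply Finset.sum_le_card_nsmul
      intro k hk
      have hne : d k ≠ n := (Finset.mem_filter.mp hk).2
      have hle : d k ≤ n := by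
        have := hammingDist_le_card_fintype (x := x k) (y := x (k+1))
        simpa [Fintype.card_fin] using this
      have : d k ≤ n - 1 := by omega
      have hcast : (d k : ℚ) ≤ ((n - 1 : ℕ) : ℚ) := by exact_mod_cast this
      calc (d k : ℚ) ≤ ((n - 1 : ℕ) : ℚ) := hcast
        _ = (n : ℚ) - 1 := by
            have : (1:ℕ) ≤ n := by omega
            push_cast [this]
            ring
    have hcards : A.card + B.card = 2^n := by
      rw [hA, hB]
      simpa [Fintype.card_fin] using
        Finset.card_filter_add_card_filter_not (s := Finset.univ)
          (p := fun k : Fin (2^n) => d k = n)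
    have ha : (A.card : ℚ) + B.card = 2^n := by exact_mod_cast hcards
    have ha2 : 2 * (A.card : ℚ) ≤ 2^n := by exact_mod_cast hAcard
    have hn1 : (1:ℚ) ≤ n := by exact_mod_cast hn.le
    nlinarith [hsplit, hA_sum, hB_sum]
  constructor
  · rw [le_div_iff₀ hpos, one_mul]
    calc (2:ℚ)^n = ∑ k : Fin (2^n), (1:ℚ) := by simp [Fintype.card_fin]
      _ ≤ ∑ k : Fin (2^n), (d k : ℚ) := by
          apply Finset.sum_le_sum
          intro k _
          exact_mod_cast hd1 k
  · rw [div_le_iff₀ hpos]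
    calc (∑ k : Fin (2^n), (d k : ℚ)) ≤ (n : ℚ) * 2^n - 2^n / 2 := hsum_le
      _ = ((n : ℚ) - 1/2) * 2^n := by ring
end

section
/- For every n > 1 there exists a maximum counting sequence, i.e., a counting sequence of length n whose average (cyclic) Hamming distance equals n - 1/2. -/
open Nat Finset


/-- Binary reflected Gray code. -/
def grayCS (i : ℕ) : ℕ := i ^^^ (i / 2)

lemma xor_div_two_CS (a b : ℕ) : (a ^^^ b) / 2 = a / 2 ^^^ b / 2 := by
  apply Nat.eq_of_testBit_eq
  intro j
  rw [← Nat.testBit_succ, Nat.testBit_xor, Nat.testBit_xor, ← Nat.testBit_succ,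
    ← Nat.testBit_succ]

lemma grayCS_div_two (i : ℕ) : grayCS i / 2 = grayCS (i / 2) := by
  rw [grayCS, grayCS, xor_div_two_CS]

lemma grayCS_lt {i m : ℕ} (h : i < 2 ^ m) : grayCS i < 2 ^ m :=
  Nat.xor_lt_two_pow h (lt_of_le_of_lt (Nat.div_le_self _ _) h)

/-- Inverse of the Gray code. -/
def grayInvCS (g : ℕ) : ℕ :=
  if h : g = 0 then 0 else g ^^^ grayInvCS (g / 2)
decreasing_by exact Nat.div_lt_self (Nat.pos_of_ne_zero h) one_lt_two

lemma grayInvCS_grayCS : ∀ i, grayInvCS (grayCS i) = i := by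
  intro i
  induction i using Nat.strong_induction_on with
  | _ i ih =>
    rcases Nat.eq_zero_or_pos i with rfl | hi
    · simp [grayCS, grayInvCS]
    · have hne : grayCS i ≠ 0 := by
        intro h
        have : i = i / 2 := (by rw [Nat.xor_assoc, Nat.xor_self, Nat.xor_zero] : i = (i ^^^ i / 2) ^^^ i / 2).trans (by rw [show (i ^^^ i / 2) = 0 from h, Nat.zero_xor])
        omega
      rw [grayInvCS]
      rw [dif_neg hne, grayCS_div_two, ih (i / 2) (by omega)]
      show (i ^^^ i / 2) ^^^ i / 2 = i
      rw [Nat.xor_assoc, Nat.xor_self, Nat.xor_zero]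

lemma grayCS_inj : Function.Injective grayCS := by
  intro a b h
  rw [← grayInvCS_grayCS a, ← grayInvCS_grayCS b, h]

lemma xor_even_succ_CS (a : ℕ) : (2 * a) ^^^ (2 * a + 1) = 1 := by
  have h1 : (2 * a : ℕ) = Nat.bit false a := by simp [Nat.bit_false]
  have h2 : (2 * a + 1 : ℕ) = Nat.bit true a := by simp [Nat.bit_true]
  rw [h2, h1, Nat.xor_bit]
  simp [Nat.bit_true]

lemma xor_odd_succ_CS (a : ℕ) : (2 * a + 1) ^^^ (2 * a + 2) = 2 * (a ^^^ (a + 1)) + 1 := by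
  have h1 : (2 * a + 1 : ℕ) = Nat.bit true a := by simp [Nat.bit_true]
  have h2 : (2 * a + 2 : ℕ) = Nat.bit false (a + 1) := by simp [Nat.bit_false]; ring
  rw [h2, h1, Nat.xor_bit]
  simp [Nat.bit_true]

lemma xor_succ_CS : ∀ i : ℕ, ∃ t, i ^^^ (i + 1) = 2 ^ (t + 1) - 1 := by
  intro i
  induction i using Nat.strong_induction_on with
  | _ i ih =>
    rcases Nat.even_or_odd i with ⟨a, ha⟩ | ⟨a, ha⟩
    · refine ⟨0, ?_⟩
      have h : i = 2 * a := by omega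
      rw [h, xor_even_succ_CS]
      norm_num
    · rcases Nat.eq_zero_or_pos i with rfl | hi
      · omega
      obtain ⟨t, ht⟩ := ih a (by omega)
      refine ⟨t + 1, ?_⟩
      have h : i = 2 * a + 1 := by omega
      rw [h, show (2 * a + 1 + 1 : ℕ) = 2 * a + 2 from rfl, xor_odd_succ_CS, ht]
      have h3 : (2 : ℕ) ^ (t + 1 + 1) = 2 * 2 ^ (t + 1) := by ring
      have h4 : 1 ≤ (2:ℕ) ^ (t + 1) := Nat.one_le_two_pow
      omega

lemma two_pow_sub_one_xor_CS (t : ℕ) : (2 ^ (t + 1) - 1) ^^^ (2 ^ t - 1) = 2 ^ t := by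
  apply Nat.eq_of_testBit_eq
  intro j
  rw [Nat.testBit_xor, Nat.testBit_two_pow_sub_one, Nat.testBit_two_pow_sub_one,
    Nat.testBit_two_pow]
  by_cases h1 : j < t
  · have a1 : j < t + 1 := by omega
    have a2 : t ≠ j := by omega
    simp [h1, a1, a2]
  · by_cases h2 : j = t
    · simp [h2]
    · have a1 : ¬ j < t + 1 := by omega
      have a2 : t ≠ j := fun h => h2 h.symm
      simp [h1, h2, a1, a2]

lemma grayCS_step (i : ℕ) : ∃ t, grayCS i ^^^ grayCS (i + 1) = 2 ^ t := by
  obtain ⟨t, ht⟩ := xor_succ_CS i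
  refine ⟨t, ?_⟩
  have key : grayCS i ^^^ grayCS (i + 1) = (i ^^^ (i + 1)) ^^^ ((i ^^^ (i + 1)) / 2) := by
    rw [xor_div_two_CS, grayCS, grayCS]
    rw [Nat.xor_assoc, Nat.xor_assoc]
    congr 1
    rw [← Nat.xor_assoc, ← Nat.xor_assoc, Nat.xor_comm (i/2)]
  rw [key, ht]
  have h3 : (2 ^ (t + 1) - 1) / 2 = 2 ^ t - 1 := by
    have : (2:ℕ) ^ (t + 1) = 2 * 2 ^ t := by ring
    have h4 : 1 ≤ (2:ℕ) ^ t := Nat.one_le_two_pow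
    omega
  rw [h3, two_pow_sub_one_xor_CS]


lemma grayCS_def (i : ℕ) : grayCS i = i ^^^ i / 2 := rfl

lemma two_mul_xor_CS (a b : ℕ) : (2 * a) ^^^ (2 * b) = 2 * (a ^^^ b) := by
  have h1 : (2 * a : ℕ) = Nat.bit false a := by simp [Nat.bit_false]
  have h2 : (2 * b : ℕ) = Nat.bit false b := by simp [Nat.bit_false]
  rw [h1, h2, Nat.xor_bit]
  simp [Nat.bit_false]

/-- The maximum counting sequence as a numeric code. -/
def seqNCS (n k : ℕ) : ℕ := (2 * grayCS (k / 2)) ^^^ (if k % 2 = 1 then 2 ^ n - 1 else 0)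

lemma seqNCS_lt {n k : ℕ} (hn : 1 ≤ n) (hk : k < 2 ^ n) : seqNCS n k < 2 ^ n := by
  have h1 : k / 2 < 2 ^ (n - 1) := by
    have : 2 ^ n = 2 * 2 ^ (n - 1) := by
      rw [← pow_succ']
      congr 1
      omega
    omega
  have h2 : 2 * grayCS (k / 2) < 2 ^ n := by
    have := grayCS_lt h1
    have h3 : 2 ^ n = 2 * 2 ^ (n - 1) := by
      rw [← pow_succ']; congr 1; omega
    omega
  apply Nat.xor_lt_two_pow h2
  split
  · have : 1 ≤ 2 ^ n := Nat.one_le_two_pow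
    omega
  · exact Nat.two_pow_pos n

lemma testBit_seqNCS_zero {n : ℕ} (hn : 1 ≤ n) (k : ℕ) :
    Nat.testBit (seqNCS n k) 0 = decide (k % 2 = 1) := by
  rw [seqNCS, Nat.testBit_xor]
  have h1 : Nat.testBit (2 * grayCS (k / 2)) 0 = false := by
    simp [Nat.testBit_zero]
  rw [h1]
  by_cases h : k % 2 = 1
  · simp [h, Nat.testBit_two_pow_sub_one]
    omega
  · simp [h]

lemma seqNCS_inj {n : ℕ} (hn : 1 ≤ n) {k k' : ℕ} (hk : k < 2 ^ n) (hk' : k' < 2 ^ n)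
    (h : seqNCS n k = seqNCS n k') : k = k' := by
  have hpar : k % 2 = k' % 2 := by
    have := congrArg (fun m => Nat.testBit m 0) h
    simp only [testBit_seqNCS_zero hn] at this
    rcases Nat.mod_two_eq_zero_or_one k with h1 | h1 <;>
      rcases Nat.mod_two_eq_zero_or_one k' with h2 | h2 <;> simp [h1, h2] at this ⊢
  have hmask : (if k % 2 = 1 then 2 ^ n - 1 else 0) = (if k' % 2 = 1 then 2 ^ n - 1 else 0) := by
    rw [hpar]
  have hg : 2 * grayCS (k / 2) = 2 * grayCS (k' / 2) := by
    have e1 : (2 * grayCS (k / 2)) =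
        seqNCS n k ^^^ (if k % 2 = 1 then 2 ^ n - 1 else 0) := by
      rw [seqNCS, Nat.xor_assoc, Nat.xor_self, Nat.xor_zero]
    have e2 : (2 * grayCS (k' / 2)) =
        seqNCS n k' ^^^ (if k' % 2 = 1 then 2 ^ n - 1 else 0) := by
      rw [seqNCS, Nat.xor_assoc, Nat.xor_self, Nat.xor_zero]
    rw [e1, e2, h, hmask]
  have : grayCS (k / 2) = grayCS (k' / 2) := by omega
  have := grayCS_inj this
  omega

lemma hammingDist_testBit (n u v : ℕ) :
    hammingDist (fun j : Fin n => Nat.testBit u j) (fun j : Fin n => Nat.testBit v j)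
      = #{j : Fin n | Nat.testBit (u ^^^ v) j} := by
  rw [hammingDist]
  congr 1
  apply Finset.filter_congr
  intro j _
  rw [Nat.testBit_xor]
  cases hu : Nat.testBit u j <;> cases hv : Nat.testBit v j <;> simp [hu, hv]

lemma card_full_CS (n : ℕ) : #{j : Fin n | Nat.testBit (2 ^ n - 1) j} = n := by
  have : ∀ j : Fin n, Nat.testBit (2 ^ n - 1) j = true := fun j => by
    simp [Nat.testBit_two_pow_sub_one, j.isLt]
  rw [Finset.filter_true_of_mem (fun j _ => by simp [this j])]
  simp

lemma card_mask_CS {n s : ℕ} (hs : s < n) :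
    #{j : Fin n | Nat.testBit ((2 ^ n - 1) ^^^ 2 ^ s) j} = n - 1 := by
  have key : ∀ j : Fin n, (Nat.testBit ((2 ^ n - 1) ^^^ 2 ^ s) j = true) ↔ j ≠ (⟨s, hs⟩ : Fin n) := by
    intro j
    rw [Nat.testBit_xor, Nat.testBit_two_pow_sub_one, Nat.testBit_two_pow]
    simp [j.isLt]
    constructor
    · intro h he
      exact h (by rw [he])
    · intro h he
      exact h (Fin.ext he.symm)
  calc #{j : Fin n | Nat.testBit ((2 ^ n - 1) ^^^ 2 ^ s) j}
      = #(Finset.univ.erase (⟨s, hs⟩ : Fin n)) := by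
        congr 1
        ext j
        simp only [Finset.mem_filter, Finset.mem_univ, true_and, Finset.mem_erase, and_true]
        exact key j
    _ = n - 1 := by
        rw [Finset.card_erase_of_mem (Finset.mem_univ _)]
        simp

lemma two_pow_split (n : ℕ) (hn : 1 ≤ n) : 2 ^ n = 2 * 2 ^ (n - 1) := by
  rw [← pow_succ']
  congr 1
  omega

lemma dist_CS (n : ℕ) (hn : 1 < n) (k : ℕ) (hk : k < 2 ^ n) :
    hammingDist (fun j : Fin n => Nat.testBit (seqNCS n k) j)
      (fun j : Fin n => Nat.testBit (seqNCS n ((k + 1) % 2 ^ n)) j) = n - k % 2 := by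
  rw [hammingDist_testBit]
  have hsplit := two_pow_split n (by omega)
  by_cases hpar : k % 2 = 0
  · -- complement step: distance n
    have hk1 : k + 1 < 2 ^ n := by omega
    have hmod : (k + 1) % 2 ^ n = k + 1 := Nat.mod_eq_of_lt hk1
    have hd2 : (k + 1) / 2 = k / 2 := by omega
    have hm2 : (k + 1) % 2 = 1 := by omega
    have hxor : seqNCS n k ^^^ seqNCS n (k + 1) = 2 ^ n - 1 := by
      rw [seqNCS, seqNCS, hd2, hm2, if_neg (by omega), if_pos rfl, Nat.xor_zero,
        ← Nat.xor_assoc, Nat.xor_self, Nat.zero_xor]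
    rw [hmod, hxor, card_full_CS, hpar]
    omega
  · -- gray step: distance n - 1
    have hpar1 : k % 2 = 1 := by omega
    have hstep : ∃ s, s < n ∧
        seqNCS n k ^^^ seqNCS n ((k + 1) % 2 ^ n) = (2 ^ n - 1) ^^^ 2 ^ s := by
      by_cases hlast : k = 2 ^ n - 1
      · refine ⟨n - 1, by omega, ?_⟩
        have hmod : (k + 1) % 2 ^ n = 0 := by
          rw [hlast]
          have h1 : 1 ≤ 2 ^ n := Nat.one_le_two_pow
          have : 2 ^ n - 1 + 1 = 2 ^ n := by omega
          rw [this, Nat.mod_self]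
        have hzero : seqNCS n 0 = 0 := by
          simp [seqNCS, grayCS_def]
        have hdiv : k / 2 = 2 ^ (n - 1) - 1 := by omega
        have hsplit2 := two_pow_split (n - 1) (by omega)
        have hgray : grayCS (2 ^ (n - 1) - 1) = 2 ^ (n - 2) := by
          rw [grayCS_def]
          have hdd : (2 ^ (n - 1) - 1) / 2 = 2 ^ (n - 2) - 1 := by
            have : n - 1 - 1 = n - 2 := by omega
            rw [this] at hsplit2
            omega
          rw [hdd]
          have hn1 : n - 1 = (n - 2) + 1 := by omega
          rw [hn1]
          exact two_pow_sub_one_xor_CS (n - 2)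
        rw [hmod, hzero, Nat.xor_zero, seqNCS, hdiv, hgray, if_pos hpar1]
        have h2 : 2 * 2 ^ (n - 2) = 2 ^ (n - 1) := by
          rw [show n - 1 = (n - 2) + 1 by omega]
          ring
        rw [h2, Nat.xor_comm]
      · have hk1 : k + 1 < 2 ^ n := by omega
        have hmod : (k + 1) % 2 ^ n = k + 1 := Nat.mod_eq_of_lt hk1
        have hd2 : (k + 1) / 2 = k / 2 + 1 := by omega
        have hm2 : (k + 1) % 2 = 0 := by omega
        obtain ⟨t, ht⟩ := grayCS_step (k / 2)
        have hb1 : grayCS (k / 2) < 2 ^ (n - 1) := grayCS_lt (by omega)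
        have hb2 : grayCS (k / 2 + 1) < 2 ^ (n - 1) := grayCS_lt (by omega)
        have hbt : (2 : ℕ) ^ t < 2 ^ (n - 1) := ht ▸ Nat.xor_lt_two_pow hb1 hb2
        have htn : t < n - 1 := (Nat.pow_lt_pow_iff_right (by norm_num)).mp hbt
        refine ⟨t + 1, by omega, ?_⟩
        rw [hmod, seqNCS, seqNCS, hd2, hm2, if_pos hpar1, if_neg (by omega), Nat.xor_zero]
        have : (2 * grayCS (k / 2) ^^^ (2 ^ n - 1)) ^^^ 2 * grayCS (k / 2 + 1)
            = (2 ^ n - 1) ^^^ (2 * grayCS (k / 2) ^^^ 2 * grayCS (k / 2 + 1)) := by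
          rw [Nat.xor_comm (2 * grayCS (k / 2)) (2 ^ n - 1), Nat.xor_assoc]
        rw [this, two_mul_xor_CS, ht]
        congr 1
        ring
    obtain ⟨s, hs, hxor⟩ := hstep
    rw [hxor, card_mask_CS hs, hpar1]

lemma sum_range_mod_two_CS (M : ℕ) : ∑ k ∈ Finset.range (2 * M), k % 2 = M := by
  induction M with
  | zero => simp
  | succ M ih =>
    have h : 2 * (M + 1) = (2 * M + 1) + 1 := by ring
    rw [h, Finset.sum_range_succ, Finset.sum_range_succ, ih]
    omega

/-- For every `n > 1` there exists a maximum counting sequence, i.e. a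
cyclic listing of all `2^n` binary `n`-tuples whose average cyclic Hamming distance
equals `n - 1/2`. -/
theorem exists_maximum_counting_sequence (n : ℕ) (hn : 1 < n) :
    ∃ x : Fin (2^n) → Fin n → Bool, Function.Bijective x ∧
      (∑ k : Fin (2^n), (hammingDist (x k) (x (k+1)) : ℚ)) / 2^n = (n : ℚ) - 1/2 := by
  refine ⟨fun k j => Nat.testBit (seqNCS n k.val) j, ?_, ?_⟩
  · rw [Fintype.bijective_iff_injective_and_card]
    refine ⟨?_, by simp⟩
    intro k k' h
    apply Fin.ext
    apply seqNCS_inj (by omega) k.isLt k'.isLt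
    apply Nat.eq_of_testBit_eq
    intro j
    by_cases hj : j < n
    · exact congrFun h ⟨j, hj⟩
    · have hle : (2 : ℕ) ^ n ≤ 2 ^ j := Nat.pow_le_pow_right (by norm_num) (by omega)
      rw [Nat.testBit_lt_two_pow (lt_of_lt_of_le (seqNCS_lt (by omega) k.isLt) hle),
        Nat.testBit_lt_two_pow (lt_of_lt_of_le (seqNCS_lt (by omega) k'.isLt) hle)]
  · have hvadd : ∀ k : Fin (2 ^ n), ((k + 1 : Fin (2 ^ n))).val = (k.val + 1) % 2 ^ n := by
      intro k
      rw [Fin.add_def]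
      congr 1
      rw [Fin.val_one']
      have h1 : 1 < 2 ^ n := by
        calc 1 < 2 ^ 1 := by norm_num
        _ ≤ 2 ^ n := Nat.pow_le_pow_right (by norm_num) (by omega)
      rw [Nat.mod_eq_of_lt h1]
    have hdist : ∀ k : Fin (2 ^ n),
        ((hammingDist (fun j : Fin n => Nat.testBit (seqNCS n k.val) j)
          (fun j : Fin n => Nat.testBit (seqNCS n ((k + 1 : Fin (2 ^ n)).val)) j) : ℕ) : ℚ)
        = (n : ℚ) - ((k.val % 2 : ℕ) : ℚ) := by
      intro k
      rw [hvadd k, dist_CS n hn k.val k.isLt, Nat.cast_sub (by omega)]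
    rw [Finset.sum_congr rfl (fun k _ => hdist k), Finset.sum_sub_distrib,
      Finset.sum_const, Finset.card_univ, Fintype.card_fin]
    have hsum : ∑ k : Fin (2 ^ n), ((k.val % 2 : ℕ) : ℚ) = 2 ^ (n - 1) := by
      rw [← Nat.cast_sum]
      have h : ∑ k : Fin (2 ^ n), (k.val % 2) = 2 ^ (n - 1) := by
        rw [Fin.sum_univ_eq_sum_range (fun k => k % 2), two_pow_split n (by omega),
          sum_range_mod_two_CS]
      rw [h]
      push_cast
      ring
    rw [hsum, nsmul_eq_mul]
    have hP : (2 : ℚ) ^ (n - 1) ≠ 0 := by positivity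
    have h2 : (2 : ℚ) ^ n = 2 * 2 ^ (n - 1) := by
      rw [← _root_.pow_succ']
      congr 1
      omega
    push_cast
    rw [h2]
    field_simp
end

section
/- In any counting sequence of length n > 1 achieving the maximum average Hamming distance n - 1/2, the Hamming distances between successive codewords alternate between n and n - 1. -/
/-- If two boolean tuples are at full Hamming distance, one is the complement
of the other. -/
lemma full_dist_eq_not {n : ℕ} (a b : Fin n → Bool)
    (h : hammingDist a b = n) : ∀ i, b i = !(a i) := by
  intro i
  have hcard : (Finset.univ.filter fun j : Fin n => a j ≠ b j).card = (Finset.univ : Finset (Fin n)).card := by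
    rw [Finset.card_univ, Fintype.card_fin]
    exact h
  have huniv := Finset.eq_univ_of_card _ hcard
  have hi : i ∈ Finset.univ.filter fun j : Fin n => a j ≠ b j := by
    rw [huniv]; exact Finset.mem_univ i
  have := (Finset.mem_filter.mp hi).2
  cases ha : a i <;> cases hb : b i <;> simp_all

/-- In any counting sequence of length `n > 1` achieving the maximum
average Hamming distance `n - 1/2`, the successive Hamming distances alternate
between `n` and `n - 1`. -/
theorem maximum_counting_sequence_alternates (n : ℕ) (hn : 1 < n)
    (x : Fin (2^n) → Fin n → Bool) (hx : Function.Bijective x)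
    (havg : (∑ k : Fin (2^n), (hammingDist (x k) (x (k+1)) : ℚ)) / 2^n = (n : ℚ) - 1/2) :
    ∀ k : Fin (2^n),
      (hammingDist (x k) (x (k+1)) = n ∧ hammingDist (x (k+1)) (x (k+2)) = n - 1) ∨
      (hammingDist (x k) (x (k+1)) = n - 1 ∧ hammingDist (x (k+1)) (x (k+2)) = n) := by
  haveI : NeZero (2^n) := ⟨by positivity⟩
  set d : Fin (2^n) → ℕ := fun k => hammingDist (x k) (x (k+1)) with hd
  have hpow : (4:ℕ) ≤ 2^n := by
    calc (4:ℕ) = 2^2 := rfl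
    _ ≤ 2^n := Nat.pow_le_pow_right (by norm_num) hn
  -- no two consecutive distances equal n
  have hnotboth : ∀ k : Fin (2^n), ¬ (d k = n ∧ d (k+1) = n) := by
    rintro k ⟨h1, h2⟩
    have c1 := full_dist_eq_not _ _ h1
    have c2 := full_dist_eq_not _ _ h2
    have hxx : x (k+1+1) = x k := by
      funext i
      rw [c2 i, c1 i, Bool.not_not]
    have hk : k + (1 + 1) = k := by rw [← add_assoc]; exact hx.injective hxx
    have h0 : (1 + 1 : Fin (2^n)) = 0 := by
      have := hk
      rwa [add_eq_left] at this
    have hv : ((1 + 1 : Fin (2^n)) : ℕ) = (((1:Fin (2^n)) : ℕ) + ((1:Fin (2^n)) : ℕ)) % 2^n := by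
      rw [Fin.add_def]
    have h1v : ((1 : Fin (2^n)) : ℕ) = 1 := Fin.val_one' _ |>.trans (Nat.mod_eq_of_lt (by omega))
    have h0v : ((1 + 1 : Fin (2^n)) : ℕ) = 0 := by rw [h0]; rfl
    rw [h1v] at hv
    rw [h0v] at hv
    have := Nat.mod_eq_of_lt (show 1 + 1 < 2^n by omega)
    omega
  -- bound on each distance
  have hle : ∀ k : Fin (2^n), d k ≤ n := fun k => by
    simpa using hammingDist_le_card_fintype (x := x k) (y := x (k+1))
  -- the total sum
  have hpow0 : ((2:ℚ)^n) ≠ 0 := by positivity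
  have hsumQ : (∑ k : Fin (2^n), (d k : ℚ)) = 2^n * n - 2^n / 2 := by
    rw [div_eq_iff hpow0] at havg
    simp only [hd]
    rw [havg]; ring
  -- sum of pairs
  have hshift : (∑ k : Fin (2^n), d (k+1)) = ∑ k : Fin (2^n), d k :=
    Fintype.sum_equiv (Equiv.addRight 1) (fun k => d (k+1)) d (fun k => rfl)
  have hsumpair : (∑ k : Fin (2^n), (d k + d (k+1))) = 2^n * (2*n - 1) := by
    have hcast : ((∑ k : Fin (2^n), (d k + d (k+1)) : ℕ) : ℚ)
        = ((2^n * (2*n - 1) : ℕ) : ℚ) := by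
      push_cast [Nat.cast_sub (by omega : 1 ≤ 2*n)]
      rw [Finset.sum_add_distrib]
      have : (∑ k : Fin (2^n), (d (k+1) : ℚ)) = ∑ k : Fin (2^n), (d k : ℚ) := by
        exact_mod_cast congrArg (Nat.cast : ℕ → ℚ) hshift
      rw [this, hsumQ]; ring
    exact_mod_cast hcast
  -- each pair sum is ≤ 2n - 1, and total is 2^n*(2n-1), so each is exactly 2n-1
  have hpairle : ∀ k : Fin (2^n), d k + d (k+1) ≤ 2*n - 1 := by
    intro k
    have h1 := hle k
    have h2 := hle (k+1)
    have h3 := hnotboth k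
    omega
  have key : ∀ k : Fin (2^n), d k + d (k+1) = 2*n - 1 := by
    intro k
    have h := (Finset.sum_eq_sum_iff_of_le (s := (Finset.univ : Finset (Fin (2^n))))
        (f := fun k => d k + d (k+1)) (g := fun _ => 2*n - 1)
        (fun k _ => hpairle k)).mp
      (by rw [hsumpair, Finset.sum_const, Finset.card_univ, Fintype.card_fin, smul_eq_mul])
    exact h k (Finset.mem_univ k)
  intro k
  have e2 : k + 2 = k + 1 + 1 := by rw [add_assoc]; exact Fin.ext (by simp [Fin.val_add])
  have k1 := key k
  have k2 := key (k+1)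
  have h1 := hle k
  have h2 := hle (k+1)
  have h3 := hle (k+1+1)
  rw [show hammingDist (x (k+1)) (x (k+2)) = d (k+1) by rw [hd, e2]]
  show (d k = n ∧ d (k+1) = n - 1) ∨ (d k = n - 1 ∧ d (k+1) = n)
  omega
end

section
/- There exists no counting sequence x_0, x_1, ..., x_{p-1} (with p = 2^n, n ≥ 1) such that the cyclic Hamming distance d_H(x_{k mod p}, x_{(k+1) mod p}) equals a fixed even number l for all k. -/
/-- Parity of a binary tuple, as an element of `ZMod 2`. -/
def tupleParity {n : ℕ} (v : Fin n → Bool) : ZMod 2 :=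
  ∑ i, (if v i then 1 else 0 : ZMod 2)

lemma parity_eq_of_even_dist {n : ℕ} (x y : Fin n → Bool)
    (h : Even (hammingDist x y)) : tupleParity x = tupleParity y := by
  have key : tupleParity x - tupleParity y = (hammingDist x y : ZMod 2) := by
    unfold tupleParity
    rw [← Finset.sum_sub_distrib]
    have : (hammingDist x y : ZMod 2)
        = ∑ i, (if x i ≠ y i then 1 else 0 : ZMod 2) := by
      rw [hammingDist, Finset.card_eq_sum_ones, Nat.cast_sum]
      rw [Finset.sum_filter]
      simp
    rw [this]
    apply Finset.sum_congr rfl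
    intro i _
    by_cases hx : x i <;> by_cases hy : y i <;> simp [hx, hy] <;> decide
  have : (hammingDist x y : ZMod 2) = 0 := by
    obtain ⟨m, hm⟩ := h
    simp [hm]
    ring_nf
    simp [show ((2 : ZMod 2)) = 0 from rfl]
  rw [this] at key
  linear_combination key

/-- There is no counting sequence (cyclic listing of all `2^n` binary
`n`-tuples, `n ≥ 1`) whose successive cyclic Hamming distances are all equal to a
fixed even number `l`. -/
theorem no_counting_sequence_constant_even_dist (n : ℕ) (hn : 1 ≤ n) (l : ℕ) (hl : Even l) :
    ¬ ∃ x : Fin (2^n) → Fin n → Bool, Function.Bijective x ∧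
        ∀ k : Fin (2^n), hammingDist (x k) (x (k+1)) = l := by
  rintro ⟨x, ⟨hinj, hsurj⟩, hdist⟩
  -- all elements of the sequence have the same parity
  have hstep : ∀ k : Fin (2^n), tupleParity (x (k+1)) = tupleParity (x k) := by
    intro k
    exact (parity_eq_of_even_dist (x k) (x (k+1)) (by rw [hdist k]; exact hl)).symm
  open Fin.NatCast in
  have hall : ∀ m : ℕ, tupleParity (x (m : Fin (2^n))) = tupleParity (x 0) := by
    intro m
    induction m with
    | zero => simp
    | succ m ih => rw [Nat.cast_add, Nat.cast_one, hstep]; exact ih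
  have hall' : ∀ k : Fin (2^n), tupleParity (x k) = tupleParity (x 0) := by
    intro k
    have := hall (k : ℕ)
    rwa [Fin.cast_val_eq_self] at this
  -- the all-false tuple has parity 0
  obtain ⟨k0, hk0⟩ := hsurj (fun _ => false)
  -- the tuple with a single true has parity 1
  obtain ⟨k1, hk1⟩ := hsurj (fun i => i = ⟨0, hn⟩)
  have h0 : tupleParity (x k0) = 0 := by
    rw [hk0]; unfold tupleParity; simp
  have h1 : tupleParity (x k1) = 1 := by
    rw [hk1]; unfold tupleParity
    rw [Finset.sum_eq_single ⟨0, hn⟩]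
    · simp
    · intro b _ hb; simp [hb]
    · simp
  have : (0 : ZMod 2) = 1 := by
    rw [← h0, ← h1, hall' k0, hall' k1]
  exact zero_ne_one this
end

section
/- Let (y_0, ..., y_{p-1}) be a cyclic Gray code on (n-1)-bit words (p = 2^{n-1}), and define the new code of length n and size 2p by (0y_0, 1Cy_1, 0y_2, 1Cy_3, ..., 1Cy_{p-1}, 0y_{p-1}, 1Cy_{p-2}, ..., 0y_1, 1Cy_0), where C denotes bitwise complement and a prefixed bit is prepended. Then any two cyclically adjacent codewords x_k, x_{(k+1) mod 2p} of the new code satisfy d_H(x_k, x_{(k+1) mod 2p}) ≥ n - 1. -/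
/-- The new counting code of length `m+1` built from a cyclic Gray code
`y` on `m`-bit words: the Gray code followed by its reversal, with every
codeword at an odd position bitwise complemented, and alternating prefix
bits `0,1,0,1,...` prepended. -/
def newCode (m : ℕ) (y : Fin (2^m) → Fin m → Bool) :
    Fin (2 * 2^m) → Fin (m+1) → Bool := fun k =>
  Fin.cons (decide (k.val % 2 = 1))
    (fun i =>
      let j : Fin (2^m) := ⟨min k.val (2 * 2^m - 1 - k.val), by
        have hk := k.isLt
        have h1 : 1 ≤ 2^m := Nat.one_le_two_pow
        omega⟩
      if k.val % 2 = 0 then y j i else !(y j i))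

lemma hammingDist_cons {n : ℕ} (a b : Bool) (u v : Fin n → Bool) :
    hammingDist (Fin.cons a u : Fin (n+1) → Bool) (Fin.cons b v)
      = (if a ≠ b then 1 else 0) + hammingDist u v := by
  simp only [hammingDist, Finset.card_filter, Fin.sum_univ_succ, Fin.cons_zero, Fin.cons_succ]

lemma hammingDist_not {n : ℕ} (u v : Fin n → Bool) :
    hammingDist u (fun i => !(v i)) = n - hammingDist u v := by
  have h : hammingDist u (fun i => !(v i)) + hammingDist u v = n := by
    simp only [hammingDist, Finset.card_filter, ← Finset.sum_add_distrib]
    have : ∀ i : Fin n, ((if u i ≠ !(v i) then 1 else 0) + if u i ≠ v i then 1 else 0) = 1 := by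
      intro i; cases u i <;> cases v i <;> simp
    rw [Finset.sum_congr rfl (fun i _ => this i)]
    simp
  omega

lemma dist_not_ge {n : ℕ} (u v : Fin n → Bool) (h : hammingDist u v ≤ 1) :
    n - 1 ≤ hammingDist u (fun i => !(v i)) := by
  rw [hammingDist_not]; omega

lemma newCode_eq (m : ℕ) (y : Fin (2^m) → Fin m → Bool) (k : Fin (2*2^m)) (j : Fin (2^m))
    (hj : j.val = min k.val (2*2^m - 1 - k.val)) :
    newCode m y k = Fin.cons (decide (k.val % 2 = 1))
      (fun i => if k.val % 2 = 0 then y j i else !(y j i)) := by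
  unfold newCode
  have h : (⟨min k.val (2 * 2^m - 1 - k.val), by
        have hk := k.isLt
        have h1 : 1 ≤ 2^m := Nat.one_le_two_pow
        omega⟩ : Fin (2^m)) = j := Fin.ext hj.symm
  rw [h]

lemma finish_aux (m : ℕ) (y : Fin (2^m) → Fin m → Bool) (k k' : Fin (2*2^m))
    (j1 j2 : Fin (2^m))
    (hj1 : j1.val = min k.val (2*2^m - 1 - k.val))
    (hj2 : j2.val = min k'.val (2*2^m - 1 - k'.val))
    (hd : hammingDist (y j1) (y j2) ≤ 1)
    (hpar : k.val % 2 ≠ k'.val % 2) :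
    m ≤ hammingDist (newCode m y k) (newCode m y k') := by
  rw [newCode_eq m y k j1 hj1, newCode_eq m y k' j2 hj2, hammingDist_cons]
  by_cases he : k.val % 2 = 0
  · have he2 : k'.val % 2 = 1 := by omega
    simp only [he, he2]
    norm_num
    have h1 : m - 1 ≤ hammingDist (fun i => y j1 i) (fun i => !(y j2 i)) :=
      dist_not_ge (y j1) (y j2) hd
    omega
  · have he1 : k.val % 2 = 1 := by omega
    have he2 : k'.val % 2 = 0 := by omega
    simp only [he1, he2]
    norm_num
    rw [hammingDist_comm]
    have hd' : hammingDist (y j2) (y j1) ≤ 1 := by rw [hammingDist_comm]; exact hd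
    have h1 : m - 1 ≤ hammingDist (fun i => y j2 i) (fun i => !(y j1 i)) :=
      dist_not_ge (y j2) (y j1) hd'
    omega

/-- If `y` is a cyclic Gray code on `(n-1)`-bit words (here `n = m+1`),
then any two cyclically adjacent codewords of the new code have Hamming distance
at least `n - 1 = m`. -/
theorem newCode_adjacent_dist (m : ℕ) (y : Fin (2^m) → Fin m → Bool)
    (hy : Function.Bijective y)
    (hgray : ∀ k : Fin (2^m), hammingDist (y k) (y (k+1)) = 1) :
    ∀ k : Fin (2 * 2^m),
      m ≤ hammingDist (newCode m y k) (newCode m y (k+1)) := by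
  intro k
  have hp : 1 ≤ 2^m := Nat.one_le_two_pow
  have hk := k.isLt
  have hone : (1 : Fin (2*2^m)).val = 1 := by
    rw [Fin.val_one']
    exact Nat.mod_eq_of_lt (by omega)
  have hadd : (k+1).val = (k.val + 1) % (2*2^m) := by
    rw [Fin.add_def, hone]
  by_cases hA : k.val = 2*2^m - 1
  · -- wrap-around case
    have hk1 : (k+1).val = 0 := by
      rw [hadd, hA]
      simp [Nat.sub_add_cancel (show 1 ≤ 2*2^m by omega)]
    refine finish_aux m y k (k+1) ⟨0, hp⟩ ⟨0, hp⟩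
      (by simp only [Fin.val_mk]; omega) (by simp only [Fin.val_mk]; omega)
      (by simp) (by omega)
  · have hk1 : (k+1).val = k.val + 1 := by
      rw [hadd]; exact Nat.mod_eq_of_lt (by omega)
    by_cases hB : k.val = 2^m - 1
    · -- middle case: same j
      refine finish_aux m y k (k+1) ⟨2^m-1, by omega⟩ ⟨2^m-1, by omega⟩
        (by simp only [Fin.val_mk]; omega) (by simp only [Fin.val_mk]; omega)
        (by simp) (by omega)
    · by_cases hC : k.val < 2^m
      · -- ascending part
        have h2 : 2 ≤ 2^m := by omega
        have hjlt : k.val + 1 < 2^m := by omega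
        have hsucc : (⟨k.val, by omega⟩ : Fin (2^m)) + 1 = ⟨k.val + 1, hjlt⟩ := by
          apply Fin.ext
          simp only [Fin.add_def, Fin.val_mk, Fin.val_one']
          rw [Nat.mod_eq_of_lt h2, Nat.mod_eq_of_lt hjlt]
        have hd : hammingDist (y ⟨k.val, by omega⟩) (y ⟨k.val+1, hjlt⟩) ≤ 1 := by
          rw [← hsucc]; exact le_of_eq (hgray _)
        exact finish_aux m y k (k+1) ⟨k.val, by omega⟩ ⟨k.val+1, hjlt⟩
          (by simp only [Fin.val_mk]; omega) (by simp only [Fin.val_mk]; omega)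
          hd (by omega)
      · -- descending part
        have h2 : 2 ≤ 2^m := by omega
        have hj2lt : 2*2^m - 2 - k.val < 2^m := by omega
        have hj1lt : 2*2^m - 1 - k.val < 2^m := by omega
        have hsucc : (⟨2*2^m - 2 - k.val, hj2lt⟩ : Fin (2^m)) + 1 = ⟨2*2^m - 1 - k.val, hj1lt⟩ := by
          apply Fin.ext
          simp only [Fin.add_def, Fin.val_mk, Fin.val_one']
          rw [Nat.mod_eq_of_lt h2,
            Nat.mod_eq_of_lt (show 2*2^m - 2 - k.val + 1 < 2^m by omega)]
          omega
        have hd : hammingDist (y ⟨2*2^m - 1 - k.val, hj1lt⟩) (y ⟨2*2^m - 2 - k.val, hj2lt⟩) ≤ 1 := by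
          rw [hammingDist_comm, ← hsucc]; exact le_of_eq (hgray _)
        exact finish_aux m y k (k+1) ⟨2*2^m - 1 - k.val, hj1lt⟩ ⟨2*2^m - 2 - k.val, hj2lt⟩
          (by simp only [Fin.val_mk]; omega) (by simp only [Fin.val_mk]; omega)
          hd (by omega)
end

section
/- The new code of length n constructed from a binary-reflected Gray code of length n-1 is itself a counting sequence: it visits each of the 2^n binary n-tuples exactly once. -/
/-- The new code of length `n = m+1` built from a Gray code listing of
all `m`-bit words (e.g. the binary-reflected Gray code) is itself a counting
sequence: it visits each of the `2^(m+1)` binary `(m+1)`-tuples exactly once. -/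
theorem newCode_bijective (m : ℕ) (y : Fin (2^m) → Fin m → Bool)
    (hy : Function.Bijective y)
    (hgray : ∀ k : Fin (2^m), hammingDist (y k) (y (k+1)) = 1) :
    Function.Bijective (newCode m y) := by
  have h1 : 1 ≤ 2^m := Nat.one_le_two_pow
  have hinj : Function.Injective (newCode m y) := by
    intro k k' h
    have hpar : k.val % 2 = k'.val % 2 := by
      have h0 := congrFun h 0
      simp only [newCode, Fin.cons_zero, decide_eq_decide] at h0
      omega
    have hj : (⟨min k.val (2 * 2^m - 1 - k.val), by have := k.isLt; omega⟩ : Fin (2^m))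
        = ⟨min k'.val (2 * 2^m - 1 - k'.val), by have := k'.isLt; omega⟩ := by
      apply hy.injective
      funext i
      have hi := congrFun h i.succ
      simp only [newCode, Fin.cons_succ] at hi
      rcases Nat.mod_two_eq_zero_or_one k.val with he | he <;>
        simp [he, ← hpar] at hi <;> exact hi
    have hmin : min k.val (2 * 2^m - 1 - k.val) = min k'.val (2 * 2^m - 1 - k'.val) :=
      congrArg Fin.val hj
    have := k.isLt; have := k'.isLt
    exact Fin.ext (by omega)
  rw [Fintype.bijective_iff_injective_and_card]
  refine ⟨hinj, ?_⟩
  simp [Fintype.card_fun, pow_succ]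
  ring
end

section
/- In the new code of length n constructed from a cyclic Gray code of length n-1, the near-2 Hamming distance satisfies: d_H(x_{k mod 2p}, x_{(k+2) mod 2p}) = 1 if k mod p ∈ {p-2, p-1}, and equals 2 otherwise. -/
def jdx (m : ℕ) (k : Fin (2 * 2^m)) : Fin (2^m) :=
  ⟨min k.val (2 * 2^m - 1 - k.val), by
    have hk := k.isLt
    have h1 : 1 ≤ 2^m := Nat.one_le_two_pow
    omega⟩

lemma consDist {m : ℕ} (a : Bool) (f g : Fin m → Bool) :
    hammingDist (Fin.cons a f : Fin (m+1) → Bool) (Fin.cons a g) = hammingDist f g := by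
  simp [hammingDist, Finset.card_filter, Fin.sum_univ_succ]

lemma notDist {m : ℕ} (f g : Fin m → Bool) :
    hammingDist (fun i => !f i) (fun i => !g i) = hammingDist f g := by
  simp [hammingDist]

lemma distParity {n : ℕ} (a b c : Fin n → Bool) :
    (hammingDist a c : ZMod 2) = hammingDist a b + hammingDist b c := by
  simp only [hammingDist, Finset.card_filter, Nat.cast_sum, ← Finset.sum_add_distrib]
  apply Finset.sum_congr rfl
  intro i _
  cases ha : a i <;> cases hb : b i <;> cases hc : c i <;> simp <;> decide

lemma distTwo {n : ℕ} (a b c : Fin n → Bool) (h1 : hammingDist a b = 1)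
    (h2 : hammingDist b c = 1) (hne : a ≠ c) : hammingDist a c = 2 := by
  have htri := hammingDist_triangle a b c
  have hz : hammingDist a c ≠ 0 := fun h => hne (hammingDist_eq_zero.mp h)
  have hpar := distParity a b c
  rw [h1, h2] at hpar
  have h12 : hammingDist a c = 1 ∨ hammingDist a c = 2 := by omega
  rcases h12 with h | h
  · rw [h] at hpar; exact absurd hpar (by decide)
  · exact h

lemma newCodeDist (m : ℕ) (y : Fin (2^m) → Fin m → Bool) (k k' : Fin (2 * 2^m))
    (h : k.val % 2 = k'.val % 2) :
    hammingDist (newCode m y k) (newCode m y k') = hammingDist (y (jdx m k)) (y (jdx m k')) := by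
  by_cases h0 : k.val % 2 = 0
  · have h0' : k'.val % 2 = 0 := by omega
    have e1 : newCode m y k = Fin.cons false (y (jdx m k)) := by
      funext i
      refine Fin.cases ?_ (fun j => ?_) i <;>
        simp [newCode, jdx, h0, Fin.cons_zero, Fin.cons_succ]
    have e2 : newCode m y k' = Fin.cons false (y (jdx m k')) := by
      funext i
      refine Fin.cases ?_ (fun j => ?_) i <;>
        simp [newCode, jdx, h0', Fin.cons_zero, Fin.cons_succ]
    rw [e1, e2, consDist]
  · have h0' : ¬ (k'.val % 2 = 0) := by omega
    have e1 : newCode m y k = Fin.cons true (fun i => !(y (jdx m k) i)) := by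
      funext i
      refine Fin.cases ?_ (fun j => ?_) i <;>
        simp [newCode, jdx, h0, Nat.mod_two_ne_zero.mp h0, Fin.cons_zero, Fin.cons_succ]
    have e2 : newCode m y k' = Fin.cons true (fun i => !(y (jdx m k') i)) := by
      funext i
      refine Fin.cases ?_ (fun j => ?_) i <;>
        simp [newCode, jdx, h0', Nat.mod_two_ne_zero.mp h0', Fin.cons_zero, Fin.cons_succ]
    rw [e1, e2, consDist, notDist]

section Gray
variable (m : ℕ) (hm : 1 ≤ m) (y : Fin (2^m) → Fin m → Bool)
  (hgray : ∀ k : Fin (2^m), hammingDist (y k) (y (k+1)) = 1)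

include hm hgray in
lemma grayStep1 (a b : Fin (2^m)) (h : b.val = a.val + 1 ∨ (a.val = 2^m - 1 ∧ b.val = 0)) :
    hammingDist (y a) (y b) = 1 := by
  have hP2 : 2 ≤ 2^m := by
    calc 2 = 2^1 := rfl
    _ ≤ 2^m := Nat.pow_le_pow_right (by norm_num) hm
  have h1 : (1 : Fin (2^m)).val = 1 := Nat.mod_eq_of_lt hP2
  have hb : b = a + 1 := by
    apply Fin.ext
    rw [Fin.val_add, h1]
    rcases h with h | ⟨ha', h2⟩
    · rw [← h]; exact (Nat.mod_eq_of_lt b.isLt).symm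
    · have ha'' : a.val + 1 = 2^m := by omega
      rw [ha'', Nat.mod_self, h2]
  rw [hb]; exact hgray a

include hm hgray in
lemma grayStep2 (hy : Function.Injective y) (a b : Fin (2^m)) (h : b.val = a.val + 2) :
    hammingDist (y a) (y b) = 2 := by
  have hb := b.isLt
  have hP2 : 2 ≤ 2^m := by
    calc 2 = 2^1 := rfl
    _ ≤ 2^m := Nat.pow_le_pow_right (by norm_num) hm
  have h1 : (1 : Fin (2^m)).val = 1 := Nat.mod_eq_of_lt hP2
  have hmid : (a + 1).val = a.val + 1 := by
    rw [Fin.val_add, h1]; exact Nat.mod_eq_of_lt (by omega)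
  apply distTwo (y a) (y (a+1)) (y b)
  · exact hgray a
  · exact grayStep1 m hm y hgray (a+1) b (Or.inl (by omega))
  · intro hc
    have heq : a = b := hy hc
    have := congrArg Fin.val heq
    omega
end Gray

/-- In the new code of length `n = m+1` built from a cyclic Gray code
on `m`-bit words (`p = 2^m`), the near-2 Hamming distance equals `1` when
`k mod p ∈ {p-2, p-1}` and `2` otherwise. -/
theorem newCode_near2_dist (m : ℕ) (hm : 1 ≤ m) (y : Fin (2^m) → Fin m → Bool)
    (hy : Function.Bijective y)
    (hgray : ∀ k : Fin (2^m), hammingDist (y k) (y (k+1)) = 1) :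
    ∀ k : Fin (2 * 2^m),
      hammingDist (newCode m y k) (newCode m y (k+2)) =
        if k.val % 2^m = 2^m - 2 ∨ k.val % 2^m = 2^m - 1 then 1 else 2 := by
  intro k
  have hP2 : 2 ≤ 2^m := by
    calc 2 = 2^1 := rfl
    _ ≤ 2^m := Nat.pow_le_pow_right (by norm_num) hm
  have hK := k.isLt
  have h2v : (2 : Fin (2*2^m)).val = 2 := by
    have h : (2 : Fin (2*2^m)).val = 2 % (2*2^m) := rfl
    rw [h]; exact Nat.mod_eq_of_lt (by omega)
  have hKv : (k + 2 : Fin (2*2^m)).val = (k.val + 2) % (2*2^m) := by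
    rw [Fin.val_add, h2v]
  have hKcases : (k + 2 : Fin (2*2^m)).val = k.val + 2 ∨
      (k + 2 : Fin (2*2^m)).val + 2*2^m = k.val + 2 := by
    rw [hKv]
    by_cases hlt : k.val + 2 < 2*2^m
    · left; exact Nat.mod_eq_of_lt hlt
    · right
      rw [Nat.mod_eq_sub_mod (by omega), Nat.mod_eq_of_lt (by omega)]
      omega
  have hmodc : k.val % 2^m = k.val ∨ k.val % 2^m + 2^m = k.val := by
    by_cases hlt : k.val < 2^m
    · left; exact Nat.mod_eq_of_lt hlt
    · right
      rw [Nat.mod_eq_sub_mod (by omega), Nat.mod_eq_of_lt (by omega)]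
      omega
  have hmodlt : k.val % 2^m < 2^m := Nat.mod_lt _ (by omega)
  have hK2 := (k + 2 : Fin (2*2^m)).isLt
  have hpar : k.val % 2 = (k + 2 : Fin (2*2^m)).val % 2 := by omega
  rw [newCodeDist m y k (k+2) hpar]
  have hj1 : (jdx m k).val = min k.val (2*2^m - 1 - k.val) := rfl
  have hj2 : (jdx m (k+2)).val =
      min (k+2 : Fin (2*2^m)).val (2*2^m - 1 - (k+2 : Fin (2*2^m)).val) := rfl
  have hj1a : (jdx m k).val ≤ k.val := hj1 ▸ min_le_left _ _
  have hj1b : (jdx m k).val ≤ 2*2^m - 1 - k.val := hj1 ▸ min_le_right _ _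
  have hj1c : (jdx m k).val = k.val ∨ (jdx m k).val = 2*2^m - 1 - k.val :=
    hj1 ▸ min_choice _ _
  have hj2a : (jdx m (k+2)).val ≤ (k+2 : Fin (2*2^m)).val := hj2 ▸ min_le_left _ _
  have hj2b : (jdx m (k+2)).val ≤ 2*2^m - 1 - (k+2 : Fin (2*2^m)).val := hj2 ▸ min_le_right _ _
  have hj2c : (jdx m (k+2)).val = (k+2 : Fin (2*2^m)).val ∨
      (jdx m (k+2)).val = 2*2^m - 1 - (k+2 : Fin (2*2^m)).val := hj2 ▸ min_choice _ _
  clear hj1 hj2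
  rcases lt_trichotomy (k.val + 2) (2^m) with hA | hA | hA
  · rw [if_neg (by omega)]
    exact grayStep2 m hm y hgray hy.injective _ _ (by omega)
  · rw [if_pos (by omega)]
    exact grayStep1 m hm y hgray _ _ (Or.inl (by omega))
  · rcases Nat.lt_or_ge k.val (2^m) with hB | hB
    · rw [if_pos (by omega), hammingDist_comm]
      exact grayStep1 m hm y hgray _ _ (Or.inl (by omega))
    · rcases lt_trichotomy (k.val + 2) (2*2^m) with hC | hC | hC
      · rw [if_neg (by omega), hammingDist_comm]
        exact grayStep2 m hm y hgray hy.injective _ _ (by omega)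
      · rw [if_pos (by omega), hammingDist_comm]
        exact grayStep1 m hm y hgray _ _ (Or.inl (by omega))
      · rw [if_pos (by omega)]
        exact grayStep1 m hm y hgray _ _ (Or.inl (by omega))
end

section
/- In the new code of length n constructed from a cyclic Gray code of length n-1, d_H(x_{p-1}, x_p) = n and d_H(x_{2p-1}, x_0) = n, i.e., at the two 'mirror points' of the construction, adjacent codewords are exact bitwise complements of each other. -/
lemma hammingDist_of_all_ne {n : ℕ} (a b : Fin n → Bool)
    (h : ∀ i, a i ≠ b i) : hammingDist a b = n := by
  unfold hammingDist
  simp [Finset.filter_true_of_mem, fun i (_ : i ∈ Finset.univ) => h i]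

/-- At the two mirror points of the construction the adjacent
codewords of the new code are exact bitwise complements, so their Hamming
distance is `n = m+1`. -/
theorem newCode_mirror_dist (m : ℕ) (y : Fin (2^m) → Fin m → Bool)
    (hy : Function.Bijective y)
    (hgray : ∀ k : Fin (2^m), hammingDist (y k) (y (k+1)) = 1) :
    hammingDist
        (newCode m y ⟨2^m - 1, by have : 1 ≤ 2^m := Nat.one_le_two_pow; omega⟩)
        (newCode m y ⟨2^m, by have : 1 ≤ 2^m := Nat.one_le_two_pow; omega⟩) = m + 1 ∧
    hammingDist
        (newCode m y ⟨2 * 2^m - 1, by have : 1 ≤ 2^m := Nat.one_le_two_pow; omega⟩)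
        (newCode m y ⟨0, by have : 1 ≤ 2^m := Nat.one_le_two_pow; omega⟩) = m + 1 := by
  have h1 : 1 ≤ 2^m := Nat.one_le_two_pow
  constructor
  · apply hammingDist_of_all_ne
    intro i
    induction i using Fin.cases with
    | zero =>
      simp only [newCode, Fin.cons_zero]
      have : (2^m - 1) % 2 ≠ 2^m % 2 := by omega
      simp only [ne_eq, decide_eq_decide]
      omega
    | succ i =>
      simp only [newCode, Fin.cons_succ]
      have hj : min (2^m - 1) (2 * 2^m - 1 - (2^m - 1)) = 2^m - 1 := by omega
      have hj' : min (2^m) (2 * 2^m - 1 - 2^m) = 2^m - 1 := by omega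
      simp only [hj, hj']
      rcases Nat.even_or_odd (2^m) with ⟨c, hc⟩ | ⟨c, hc⟩
      · have e1 : (2^m - 1) % 2 = 1 := by omega
        have e2 : (2^m) % 2 = 0 := by omega
        simp [e1, e2]
      · have e1 : (2^m - 1) % 2 = 0 := by omega
        have e2 : (2^m) % 2 = 1 := by omega
        simp [e1, e2]
  · apply hammingDist_of_all_ne
    intro i
    have hodd : (2 * 2^m - 1) % 2 = 1 := by omega
    induction i using Fin.cases with
    | zero =>
      simp only [newCode, Fin.cons_zero]
      simp [hodd]
    | succ i =>
      simp only [newCode, Fin.cons_succ]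
      have hj : min (2 * 2^m - 1) (2 * 2^m - 1 - (2 * 2^m - 1)) = 0 := by omega
      have hj' : min 0 (2 * 2^m - 1 - 0) = 0 := by omega
      simp [hj, hj', hodd]
end

section
/- In the new code x_0, ..., x_{2p-1} of length n constructed from a cyclic Gray code, for every k the codeword x_{2p-1-k} equals the bitwise complement of x_k; i.e., the second half of the sequence is the complemented reversal of the first half. -/
/-- In the new code `x_0, ..., x_{2p-1}` built from a cyclic Gray
code, the codeword `x_{2p-1-k}` is the bitwise complement of `x_k` for every
`k`: the second half of the sequence is the complemented reversal of the first. -/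
theorem newCode_half_complement (m : ℕ) (y : Fin (2^m) → Fin m → Bool)
    (hy : Function.Bijective y)
    (hgray : ∀ k : Fin (2^m), hammingDist (y k) (y (k+1)) = 1) :
    ∀ k : Fin (2 * 2^m),
      newCode m y ⟨2 * 2^m - 1 - k.val, by
          have hk := k.isLt
          have h1 : 1 ≤ 2^m := Nat.one_le_two_pow
          omega⟩
        = fun i => !(newCode m y k i) := by
  intro k
  funext i
  have h1 : 1 ≤ 2^m := Nat.one_le_two_pow
  have hk := k.isLt
  have hmin : min (2 * 2^m - 1 - k.val) (2 * 2^m - 1 - (2 * 2^m - 1 - k.val))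
      = min k.val (2 * 2^m - 1 - k.val) := by omega
  have hpar : (2 * 2^m - 1 - k.val) % 2 = 1 - k.val % 2 := by omega
  refine Fin.cases ?_ ?_ i
  · simp only [newCode, Fin.cons_zero]
    rcases Nat.mod_two_eq_zero_or_one k.val with h | h <;> simp [hpar, h]
  · intro j
    simp only [newCode, Fin.cons_succ, hmin]
    rcases Nat.mod_two_eq_zero_or_one k.val with h | h <;>
      simp [hpar, h]
end
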